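/- Let Γ : ℝ² → ℝ satisfy 0 ≤ Γ(ξ,ζ) ≤ C(1 + |ξ|^{p−1} + |ζ|^{p−1}) for some constants C > 0, p > 1. Let 0 < δ < 1 and let ψ_δ : ℝ → [0,∞) be supported in (−δ, δ) with ∫ψ_δ = 1. Define Υ(ξ,ζ) = ∫_{−∞}^{ξ} ∫_{ζ}^{∞} Γ(ξ',ζ') |ξ'−ζ'| ψ_δ(ξ'−ζ') dζ' dξ'. Then there is a constant C' (depending only on C and p) such that Υ(ξ,ζ) ≤ C' δ (1 + |ξ|^p + |ζ|^p) for all ξ ≥ ζ ∈ ℝ. -/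

import Mathlib

open MeasureTheory Set

theorem upsilon_bound (C p : ℝ) (hC : 0 < C) (hp : 1 < p) :
    ∃ C' > (0:ℝ), ∀ δ : ℝ, 0 < δ → δ < 1 →
      ∀ ψ : ℝ → ℝ, Measurable ψ → (∀ t, 0 ≤ ψ t) →
        Function.support ψ ⊆ Ioo (-δ) δ → (∫ t : ℝ, ψ t) = 1 →
      ∀ Γ : ℝ → ℝ → ℝ, Measurable (fun q : ℝ × ℝ => Γ q.1 q.2) →
        (∀ ξ ζ : ℝ, 0 ≤ Γ ξ ζ ∧ Γ ξ ζ ≤ C * (1 + |ξ| ^ (p - 1) + |ζ| ^ (p - 1))) →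
      ∀ ξ ζ : ℝ, ζ ≤ ξ →
        (∫ ξ' in Iic ξ, ∫ ζ' in Ici ζ, Γ ξ' ζ' * |ξ' - ζ'| * ψ (ξ' - ζ')) ≤
          C' * δ * (1 + |ξ| ^ p + |ζ| ^ p) := by
  refine ⟨6 * 3 ^ p * C, by positivity, ?_⟩
  intro δ hδ0 hδ1 ψ hψm hψ0 hψs hψ1 Γ hΓm hΓb ξ ζ hζξ
  have hψint : Integrable ψ := by
    by_contra h
    rw [integral_undef h] at hψ1; norm_num at hψ1
  set R : ℝ := max |ξ| |ζ| with hR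
  have hR0 : (0:ℝ) ≤ R := le_trans (abs_nonneg ξ) (le_max_left _ _)
  set M : ℝ := C * (1 + 2 * (R + 2) ^ (p - 1)) with hM
  have hRp : (0:ℝ) ≤ (R + 2) ^ (p - 1) := Real.rpow_nonneg (by linarith) _
  have hM0 : 0 ≤ M := by
    rw [hM]; nlinarith
  have hξR : ξ ≤ R := le_trans (le_abs_self ξ) (le_max_left _ _)
  have hζR : -R ≤ ζ := by
    have := neg_abs_le ζ
    have := le_max_right |ξ| |ζ|
    linarith
  -- key pointwise bound on the inner integral
  have key : ∀ ξ' ∈ Iic ξ,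
      (∫ ζ' in Ici ζ, Γ ξ' ζ' * |ξ' - ζ'| * ψ (ξ' - ζ')) ≤
        (Ioc (ζ - δ) ξ).indicator (fun _ => δ * M) ξ' := by
    intro ξ' hξ'
    simp only [mem_Iic] at hξ'
    by_cases hcase : ζ - δ < ξ'
    · rw [indicator_of_mem (by exact ⟨hcase, hξ'⟩)]
      have hb : ∀ ζ' : ℝ, Γ ξ' ζ' * |ξ' - ζ'| * ψ (ξ' - ζ') ≤ δ * M * ψ (ξ' - ζ') := by
        intro ζ'
        by_cases hz : ψ (ξ' - ζ') = 0
        · simp [hz]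
        · have ht : ξ' - ζ' ∈ Ioo (-δ) δ := hψs (Function.mem_support.mpr hz)
          have htabs : |ξ' - ζ'| ≤ δ := le_of_lt (abs_lt.mpr ⟨ht.1, ht.2⟩)
          have hξ'abs : |ξ'| ≤ R + 1 := by
            rw [abs_le]; constructor <;> linarith
          have hζ'abs : |ζ'| ≤ R + 2 := by
            have h1 : |ζ'| ≤ |ξ'| + |ξ' - ζ'| := by
              have : ζ' = ξ' - (ξ' - ζ') := by ring
              calc |ζ'| = |ξ' - (ξ' - ζ')| := by rw [← this]
                _ ≤ |ξ'| + |ξ' - ζ'| := abs_sub _ _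
            linarith
          have h1 : |ξ'| ^ (p - 1) ≤ (R + 2) ^ (p - 1) :=
            Real.rpow_le_rpow (abs_nonneg _) (by linarith) (by linarith)
          have h2 : |ζ'| ^ (p - 1) ≤ (R + 2) ^ (p - 1) :=
            Real.rpow_le_rpow (abs_nonneg _) hζ'abs (by linarith)
          have hΓM : Γ ξ' ζ' ≤ M := by
            rw [hM]
            have := (hΓb ξ' ζ').2
            nlinarith
          have hmm : Γ ξ' ζ' * |ξ' - ζ'| ≤ M * δ :=
            mul_le_mul hΓM htabs (abs_nonneg _) hM0
          calc Γ ξ' ζ' * |ξ' - ζ'| * ψ (ξ' - ζ') ≤ (M * δ) * ψ (ξ' - ζ') :=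
                mul_le_mul_of_nonneg_right hmm (hψ0 _)
            _ = δ * M * ψ (ξ' - ζ') := by ring
      have hgint : Integrable (fun ζ' => δ * M * ψ (ξ' - ζ'))
          (volume.restrict (Ici ζ)) :=
        ((hψint.comp_sub_left ξ').const_mul (δ * M)).integrableOn
      have hnn : (0:ℝ → ℝ) ≤ᵐ[volume.restrict (Ici ζ)]
          fun ζ' => Γ ξ' ζ' * |ξ' - ζ'| * ψ (ξ' - ζ') :=
        ae_of_all _ fun ζ' =>
          mul_nonneg (mul_nonneg (hΓb ξ' ζ').1 (abs_nonneg _)) (hψ0 _)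
      have hmono := integral_mono_of_nonneg hnn hgint (ae_of_all _ hb)
      have hle1 : (∫ ζ' in Ici ζ, ψ (ξ' - ζ')) ≤ 1 := by
        have h1 : (∫ ζ' : ℝ, ψ (ξ' - ζ')) = 1 := by
          rw [integral_sub_left_eq_self ψ volume ξ']; exact hψ1
        calc (∫ ζ' in Ici ζ, ψ (ξ' - ζ'))
            ≤ ∫ ζ' : ℝ, ψ (ξ' - ζ') :=
              setIntegral_le_integral (hψint.comp_sub_left ξ')
                (ae_of_all _ fun x => hψ0 _)
          _ = 1 := h1
      calc (∫ ζ' in Ici ζ, Γ ξ' ζ' * |ξ' - ζ'| * ψ (ξ' - ζ'))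
          ≤ ∫ ζ' in Ici ζ, δ * M * ψ (ξ' - ζ') := hmono
        _ = δ * M * ∫ ζ' in Ici ζ, ψ (ξ' - ζ') := integral_const_mul _ _
        _ ≤ δ * M * 1 := mul_le_mul_of_nonneg_left hle1 (by positivity)
        _ = δ * M := mul_one _
    · rw [indicator_of_notMem (fun hmem => hcase hmem.1)]
      have : (∫ ζ' in Ici ζ, Γ ξ' ζ' * |ξ' - ζ'| * ψ (ξ' - ζ')) = 0 := by
        apply setIntegral_eq_zero_of_forall_eq_zero
        intro ζ' hζ'
        simp only [mem_Ici] at hζ'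
        have hz : ψ (ξ' - ζ') = 0 := by
          by_contra hne
          have ht : ξ' - ζ' ∈ Ioo (-δ) δ := hψs (Function.mem_support.mpr hne)
          have : ξ' - ζ' ≤ -δ := by
            push_neg at hcase; linarith
          linarith [ht.1]
        simp [hz]
      rw [this]
  -- integrability of the indicator bound
  have hind_int : Integrable ((Ioc (ζ - δ) ξ).indicator (fun _ => δ * M))
      (volume.restrict (Iic ξ)) := by
    have h1 : Integrable ((Ioc (ζ - δ) ξ).indicator (fun _ => δ * M)) volume := by
      rw [integrable_indicator_iff measurableSet_Ioc]
      exact integrableOn_const measure_Ioc_lt_top.ne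
    exact h1.integrableOn
  have houter := integral_mono_of_nonneg
    (ae_of_all _ fun ξ' => integral_nonneg fun ζ' =>
      mul_nonneg (mul_nonneg (hΓb ξ' ζ').1 (abs_nonneg _)) (hψ0 _))
    hind_int
    (ae_restrict_of_forall_mem measurableSet_Iic key)
  have hval : (∫ ξ' in Iic ξ, (Ioc (ζ - δ) ξ).indicator (fun _ => δ * M) ξ')
      = (ξ - (ζ - δ)) * (δ * M) := by
    rw [setIntegral_indicator measurableSet_Ioc]
    have hss : Iic ξ ∩ Ioc (ζ - δ) ξ = Ioc (ζ - δ) ξ :=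
      inter_eq_self_of_subset_right (fun x hx => hx.2)
    rw [hss, setIntegral_const, Real.volume_real_Ioc_of_le (by linarith)]
    simp [smul_eq_mul]
  -- final arithmetic
  have hB1 : (1:ℝ) ≤ R + 2 := by linarith
  have hBle : R + 2 ≤ 3 * max R 1 := by
    rcases le_total R 1 with h | h
    · rw [max_eq_right h]; linarith
    · rw [max_eq_left h]; linarith
  have hmax0 : (0:ℝ) ≤ max R 1 := le_trans zero_le_one (le_max_right _ _)
  have hBp : (R + 2) ^ p ≤ 3 ^ p * (max R 1) ^ p := by
    calc (R + 2) ^ p ≤ (3 * max R 1) ^ p :=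
        Real.rpow_le_rpow (by linarith) hBle (by linarith)
      _ = 3 ^ p * (max R 1) ^ p := Real.mul_rpow (by norm_num) hmax0
  have hξp : (0:ℝ) ≤ |ξ| ^ p := Real.rpow_nonneg (abs_nonneg _) _
  have hζp : (0:ℝ) ≤ |ζ| ^ p := Real.rpow_nonneg (abs_nonneg _) _
  have hmaxp : (max R 1) ^ p ≤ 1 + |ξ| ^ p + |ζ| ^ p := by
    rcases max_cases R 1 with ⟨he, _⟩ | ⟨he, _⟩
    · rw [he, hR]
      rcases max_cases |ξ| |ζ| with ⟨he2, _⟩ | ⟨he2, _⟩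
      · rw [he2]; linarith
      · rw [he2]; linarith
    · rw [he, Real.one_rpow]; linarith
  have hMle : M ≤ 3 * C * (R + 2) ^ (p - 1) := by
    have h1 : (1:ℝ) ≤ (R + 2) ^ (p - 1) :=
      Real.one_le_rpow hB1 (by linarith)
    rw [hM]; nlinarith
  have hBpp : (R + 2) ^ (p - 1) * (R + 2) = (R + 2) ^ p := by
    rw [← Real.rpow_add_one (by positivity : (R:ℝ) + 2 ≠ 0) (p - 1)]
    norm_num
  have hA : ξ - (ζ - δ) ≤ 2 * (R + 2) := by linarith
  have hfinal : (ξ - (ζ - δ)) * (δ * M) ≤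
      6 * 3 ^ p * C * δ * (1 + |ξ| ^ p + |ζ| ^ p) := by
    calc (ξ - (ζ - δ)) * (δ * M)
        ≤ (2 * (R + 2)) * (δ * (3 * C * (R + 2) ^ (p - 1))) := by
          apply mul_le_mul hA (mul_le_mul_of_nonneg_left hMle hδ0.le)
            (by positivity) (by positivity)
      _ = 6 * C * δ * ((R + 2) ^ (p - 1) * (R + 2)) := by ring
      _ = 6 * C * δ * (R + 2) ^ p := by rw [hBpp]
      _ ≤ 6 * C * δ * (3 ^ p * (1 + |ξ| ^ p + |ζ| ^ p)) := by
          apply mul_le_mul_of_nonneg_left _ (by positivity)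
          exact le_trans hBp (mul_le_mul_of_nonneg_left hmaxp (by positivity))
      _ = 6 * 3 ^ p * C * δ * (1 + |ξ| ^ p + |ζ| ^ p) := by ring
  calc (∫ ξ' in Iic ξ, ∫ ζ' in Ici ζ, Γ ξ' ζ' * |ξ' - ζ'| * ψ (ξ' - ζ'))
      ≤ ∫ ξ' in Iic ξ, (Ioc (ζ - δ) ξ).indicator (fun _ => δ * M) ξ' := houter
    _ = (ξ - (ζ - δ)) * (δ * M) := hval
    _ ≤ 6 * 3 ^ p * C * δ * (1 + |ξ| ^ p + |ζ| ^ p) := hfinal
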